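/- Let A be a weighted directed graph on n vertices that is weakly connected, let i be a vertex with d i > 0, and let b be the orthogonal projection of d onto the kernel of L. Then the forward influence centrality of i satisfies v_f(i) = b i / d i. -/

import Mathlib

open Matrix BigOperators

noncomputable section

variable {n : ℕ}

/-- Weighted in-degree vector. -/
def indeg (A : Matrix (Fin n) (Fin n) ℝ) (j : Fin n) : ℝ := ∑ i, A i j

/-- Weighted out-degree vector. -/
def outdeg (A : Matrix (Fin n) (Fin n) ℝ) (i : Fin n) : ℝ := ∑ j, A i j

/-- Weighted in-degree Laplacian `L = diag d - A`. -/
def inLap (A : Matrix (Fin n) (Fin n) ℝ) : Matrix (Fin n) (Fin n) ℝ :=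
  Matrix.diagonal (indeg A) - A

/-- Reachability: reflexive-transitive closure of the edge relation. -/
def Reaches (A : Matrix (Fin n) (Fin n) ℝ) : Fin n → Fin n → Prop :=
  Relation.ReflTransGen fun i j => 0 < A i j

/-- Weak connectivity. -/
def WeaklyConnected (A : Matrix (Fin n) (Fin n) ℝ) : Prop :=
  ∀ i j : Fin n, Relation.ReflTransGen (fun i j => 0 < A i j ∨ 0 < A j i) i j

/-- Strong connectivity. -/
def StronglyConnected (A : Matrix (Fin n) (Fin n) ℝ) : Prop :=
  ∀ i j : Fin n, Reaches A i j

/-- Simply forward influenced graph. -/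
def SimplyForwardInfluenced (A : Matrix (Fin n) (Fin n) ℝ) : Prop :=
  (∃ i, indeg A i = 0) ∧ (∃ i, indeg A i ≠ 0) ∧
    ∀ j, indeg A j ≠ 0 → ∃ i, indeg A i = 0 ∧ Reaches A i j

/-- A set of vertices with no incoming edges from outside. -/
def InClosed (A : Matrix (Fin n) (Fin n) ℝ) (S : Finset (Fin n)) : Prop :=
  ∀ i j : Fin n, i ∉ S → j ∈ S → A i j = 0

/-- Minimal source subgraph. -/
def MinSourceSubgraph (A : Matrix (Fin n) (Fin n) ℝ) (S : Finset (Fin n)) : Prop :=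
  S.Nonempty ∧ InClosed A S ∧ ∀ T ⊆ S, T.Nonempty → T ≠ S → ¬ InClosed A T

/-- Total edge weight. -/
def totalWeight (A : Matrix (Fin n) (Fin n) ℝ) : ℝ := ∑ i, ∑ j, A i j

/-- `g` is a forward hierarchical level vector: a minimizer of `‖Lᵀ x - d‖₂`. -/
def IsFHL (A : Matrix (Fin n) (Fin n) ℝ) (g : Fin n → ℝ) : Prop :=
  ∀ x : Fin n → ℝ,
    ∑ i, ((inLap A)ᵀ.mulVec g i - indeg A i) ^ 2 ≤
      ∑ i, ((inLap A)ᵀ.mulVec x i - indeg A i) ^ 2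

/-- Forward democracy coefficient, computed from a forward hierarchical level vector `g`. -/
def etaF (A : Matrix (Fin n) (Fin n) ℝ) (g : Fin n → ℝ) : ℝ :=
  1 - (∑ i, ∑ j, A i j * (g j - g i)) / totalWeight A

/-- Forward influence centrality of a vertex, from a forward hierarchical level vector `g`. -/
def vF (A : Matrix (Fin n) (Fin n) ℝ) (g : Fin n → ℝ) (i : Fin n) : ℝ :=
  if indeg A i = 0 then 1 else 1 - (∑ k, A k i * (g i - g k)) / indeg A i

/-- `b` is the orthogonal projection of `d` onto `ker L` (standard Euclidean inner product). -/
def IsProjKerL (A : Matrix (Fin n) (Fin n) ℝ) (b : Fin n → ℝ) : Prop :=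
  (inLap A).mulVec b = 0 ∧
    ∀ x : Fin n → ℝ, (inLap A).mulVec x = 0 → ∑ i, (indeg A i - b i) * x i = 0

theorem stmt_15 (hn : 0 < n) (A : Matrix (Fin n) (Fin n) ℝ)
    (hA : ∀ i j, 0 ≤ A i j) (hdiag : ∀ i, A i i = 0)
    (hwc : WeaklyConnected A)
    (i : Fin n) (hi : 0 < indeg A i)
    (g : Fin n → ℝ) (hg : IsFHL A g)
    (b : Fin n → ℝ) (hb : IsProjKerL A b) :
    vF A g i = b i / indeg A i := by
  classical
  set L := inLap A with hL
  set M := Lᵀ with hM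
  set d := indeg A with hd
  -- First-order optimality condition
  have key : ∀ h : Fin n → ℝ, ∑ k, (M.mulVec g k - d k) * M.mulVec h k = 0 := by
    intro h
    set c := ∑ k, (M.mulVec g k - d k) * M.mulVec h k with hc
    set s := ∑ k, (M.mulVec h k) ^ 2 with hs
    have hs0 : 0 ≤ s := Finset.sum_nonneg fun k _ => sq_nonneg _
    have hineq : ∀ t : ℝ, 0 ≤ 2 * t * c + t ^ 2 * s := by
      intro t
      have expand : ∑ k, (M.mulVec (g + t • h) k - d k) ^ 2
          = (∑ k, (M.mulVec g k - d k) ^ 2) + (2 * t * c + t ^ 2 * s) := by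
        have hmv : M.mulVec (g + t • h) = M.mulVec g + t • M.mulVec h := by
          rw [Matrix.mulVec_add, Matrix.mulVec_smul]
        rw [hmv, hc, hs, Finset.mul_sum, Finset.mul_sum, ← Finset.sum_add_distrib,
          ← Finset.sum_add_distrib]
        refine Finset.sum_congr rfl fun k _ => ?_
        simp only [Pi.add_apply, Pi.smul_apply, smul_eq_mul]
        ring
      have := hg (g + t • h)
      rw [expand] at this
      linarith
    have hs1 : (0:ℝ) < s + 1 := by linarith
    have h1 := hineq (-(c / (s + 1)))
    have hce : c / (s + 1) * (s + 1) = c := div_mul_cancel₀ c (ne_of_gt hs1)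
    have h2 : 2 * -(c / (s + 1)) * c + (-(c / (s + 1))) ^ 2 * s
        = -((c / (s + 1)) ^ 2 * s) - 2 * (c / (s + 1)) ^ 2 := by
      have hne : s + 1 ≠ 0 := ne_of_gt hs1
      field_simp
      ring
    rw [h2] at h1
    have h3 : 0 ≤ (c / (s + 1)) ^ 2 * s := mul_nonneg (sq_nonneg _) hs0
    have hsq : (c / (s + 1)) ^ 2 = 0 := by
      have hle : (c / (s + 1)) ^ 2 ≤ 0 := by linarith
      exact le_antisymm hle (sq_nonneg _)
    have hq : c / (s + 1) = 0 := by
      exact pow_eq_zero_iff (by norm_num) |>.mp hsq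
    rw [← hce, hq, zero_mul]
  -- r := d - M g is in the kernel of L
  set r : Fin n → ℝ := fun k => d k - M.mulVec g k with hr
  have hLr : L.mulVec r = 0 := by
    funext k
    have h1 := key (Pi.single k 1)
    have e1 : ∀ j, M.mulVec (Pi.single k 1) j = L k j := by
      intro j
      simp [hM, Matrix.mulVec, dotProduct, Pi.single_apply, mul_ite,
        Matrix.transpose_apply]
    rw [Finset.sum_congr rfl (fun j _ => by rw [e1])] at h1
    have h2 : (∑ j, L k j * r j) + ∑ j, (M.mulVec g j - d j) * L k j = 0 := by
      rw [← Finset.sum_add_distrib]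
      apply Finset.sum_eq_zero
      intro j _
      simp only [hr]
      ring
    have : L.mulVec r k = ∑ j, L k j * r j := by
      simp [Matrix.mulVec, dotProduct]
    rw [this]
    simp only [Pi.zero_apply]
    linarith
  -- M g is orthogonal to the kernel of L
  have horth : ∀ x : Fin n → ℝ, L.mulVec x = 0 → ∑ k, M.mulVec g k * x k = 0 := by
    intro x hx
    have hdp : M.mulVec g ⬝ᵥ x = g ⬝ᵥ L.mulVec x := by
      rw [hM, Matrix.mulVec_transpose, ← Matrix.dotProduct_mulVec]
    have : M.mulVec g ⬝ᵥ x = 0 := by rw [hdp, hx]; simp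
    simpa [dotProduct] using this
  -- uniqueness of projection : b = r
  have hbr : ∀ k, b k = r k := by
    have hxk : L.mulVec (b - r) = 0 := by
      rw [Matrix.mulVec_sub, hb.1, hLr, sub_self]
    have e1 := hb.2 (b - r) hxk
    have e2 : ∑ k, (d k - r k) * (b - r) k = 0 := by
      have := horth (b - r) hxk
      refine Eq.trans (Finset.sum_congr rfl fun k _ => ?_) this
      simp [hr]
    have e3 : ∑ k, (b k - r k) ^ 2 = 0 := by
      have : ∑ k, (b k - r k) ^ 2 = (∑ k, (d k - r k) * (b - r) k)
          - ∑ k, (d k - b k) * (b - r) k := by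
        rw [← Finset.sum_sub_distrib]
        refine Finset.sum_congr rfl fun k _ => ?_
        simp only [Pi.sub_apply]
        ring
      rw [this, e1, e2, sub_zero]
    intro k
    have := (Finset.sum_eq_zero_iff_of_nonneg (fun j _ => sq_nonneg (b j - r j))).mp e3
      k (Finset.mem_univ k)
    have : b k - r k = 0 := by
      exact pow_eq_zero_iff (by norm_num) |>.mp this
    linarith
  -- compute M g at i
  have hMi : M.mulVec g i = ∑ k, A k i * (g i - g k) := by
    have : M.mulVec g i = ∑ j, (Matrix.diagonal d i j - A j i) * g j := by
      simp [hM, hL, inLap, Matrix.mulVec, dotProduct, Matrix.transpose_apply,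
        Matrix.sub_apply, hd]
    rw [this]
    have hdiagsum : ∑ j, Matrix.diagonal d i j * g j = d i * g i := by
      simp [Matrix.diagonal_apply, ite_mul, Finset.sum_ite_eq]
    calc ∑ j, (Matrix.diagonal d i j - A j i) * g j
        = (∑ j, Matrix.diagonal d i j * g j) - ∑ j, A j i * g j := by
          rw [← Finset.sum_sub_distrib]; exact Finset.sum_congr rfl fun j _ => by ring
      _ = d i * g i - ∑ j, A j i * g j := by rw [hdiagsum]
      _ = ∑ k, A k i * (g i - g k) := by
          rw [Finset.sum_congr rfl (fun k (_ : k ∈ Finset.univ) =>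
            (mul_sub (A k i) (g i) (g k))), Finset.sum_sub_distrib, ← Finset.sum_mul]
          rfl
  -- finish
  have hdi : d i ≠ 0 := ne_of_gt hi
  rw [vF, if_neg hdi, ← hMi]
  have hbi : b i = d i - M.mulVec g i := hbr i
  rw [hbi]
  rw [hd] at hdi ⊢
  field_simp
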